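/- Let X be a Banach space contained in L^0(ℝ^n) satisfying the lattice property (L). Then the following are equivalent: (i) X satisfies the saturation property (Sa); (ii) there is an increasing sequence of measurable sets F_1 ⊂ F_2 ⊂ ⋯ ⊂ ℝ^n with χ_{F_k} ∈ X for every k and ⋃_{k=1}^∞ F_k = ℝ^n; (iii) there is a function u ∈ X with u > 0 a.e.; (iv) whenever g ∈ L^0(ℝ^n) satisfies ∫_{ℝ^n} |f(x)g(x)| dx = 0 for all f ∈ X, then g = 0 a.e. -/

import Mathlib

open MeasureTheory Filter ENNReal

noncomputable section

/-- ℝⁿ as a Euclidean space. -/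
abbrev Rn (n : ℕ) := EuclideanSpace ℝ (Fin n)

/-- A Banach space `X` contained in `L⁰(ℝⁿ)`: a collection of (a.e. equivalence
classes of) measurable functions on `ℝⁿ`, with a complete norm. -/
structure BanachInL0 (n : ℕ) where
  carrier : Set (Rn n → ℝ)
  norm : (Rn n → ℝ) → ℝ
  mem_congr : ∀ {f g : Rn n → ℝ}, f =ᵐ[volume] g → f ∈ carrier → g ∈ carrier
  norm_congr : ∀ {f g : Rn n → ℝ}, f =ᵐ[volume] g → norm f = norm g
  aemeasurable : ∀ {f : Rn n → ℝ}, f ∈ carrier → AEMeasurable f volume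
  zero_mem : (0 : Rn n → ℝ) ∈ carrier
  add_mem : ∀ {f g : Rn n → ℝ}, f ∈ carrier → g ∈ carrier → f + g ∈ carrier
  smul_mem : ∀ (c : ℝ) {f : Rn n → ℝ}, f ∈ carrier → c • f ∈ carrier
  norm_nonneg : ∀ f : Rn n → ℝ, 0 ≤ norm f
  norm_eq_zero : ∀ {f : Rn n → ℝ}, f ∈ carrier → norm f = 0 → f =ᵐ[volume] (0 : Rn n → ℝ)
  norm_zero : norm 0 = 0
  norm_add_le : ∀ {f g : Rn n → ℝ}, f ∈ carrier → g ∈ carrier → norm (f + g) ≤ norm f + norm g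
  norm_smul : ∀ (c : ℝ) (f : Rn n → ℝ), norm (c • f) = |c| * norm f
  complete : ∀ F : ℕ → Rn n → ℝ, (∀ k, F k ∈ carrier) →
    (∀ ε : ℝ, 0 < ε → ∃ N : ℕ, ∀ k l, N ≤ k → N ≤ l → norm (F k - F l) < ε) →
    ∃ g ∈ carrier, Tendsto (fun k => norm (F k - g)) atTop (nhds 0)

namespace BanachInL0

variable {n : ℕ}

/-- The lattice property (L). -/
def PropL (X : BanachInL0 n) : Prop :=
  ∀ f g : Rn n → ℝ, f ∈ X.carrier → AEMeasurable g volume →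
    (∀ᵐ x ∂volume, |g x| ≤ |f x|) → g ∈ X.carrier ∧ X.norm g ≤ X.norm f

/-- The Fatou property (F). -/
def PropF (X : BanachInL0 n) : Prop :=
  ∀ (F : ℕ → Rn n → ℝ) (f : Rn n → ℝ), (∀ k, F k ∈ X.carrier) → AEMeasurable f volume →
    (∀ᵐ x ∂volume, (∀ k, 0 ≤ F k x) ∧ Monotone (fun k => F k x) ∧
      Tendsto (fun k => F k x) atTop (nhds (f x))) →
    BddAbove (Set.range fun k => X.norm (F k)) →
    f ∈ X.carrier ∧ X.norm f = ⨆ k, X.norm (F k)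

/-- The saturation property (Sa). -/
def PropSa (X : BanachInL0 n) : Prop :=
  ∀ E : Set (Rn n), MeasurableSet E → 0 < volume E →
    ∃ F : Set (Rn n), MeasurableSet F ∧ F ⊆ E ∧ 0 < volume F ∧
      F.indicator (fun _ => (1 : ℝ)) ∈ X.carrier

/-- Property (BSi): the indicator of every ball belongs to `X`. -/
def PropBSi (X : BanachInL0 n) : Prop :=
  ∀ (c : Rn n) (r : ℝ), 0 < r →
    (Metric.ball c r).indicator (fun _ => (1 : ℝ)) ∈ X.carrier

/-- Property (BLI): functions in `X` are locally integrable, uniformly on each ball. -/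
def PropBLI (X : BanachInL0 n) : Prop :=
  ∀ (c : Rn n) (r : ℝ), 0 < r → ∃ C : ℝ, ∀ f ∈ X.carrier,
    ∫⁻ y in Metric.ball c r, ENNReal.ofReal |f y| ≤ ENNReal.ofReal (C * X.norm f)

/-- Property (Si): the indicator of every set of finite measure belongs to `X`. -/
def PropSi (X : BanachInL0 n) : Prop :=
  ∀ E : Set (Rn n), MeasurableSet E → volume E < ∞ →
    E.indicator (fun _ => (1 : ℝ)) ∈ X.carrier

/-- Property (LI): functions in `X` are integrable on sets of finite measure,
uniformly on each such set. -/
def PropLI (X : BanachInL0 n) : Prop :=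
  ∀ E : Set (Rn n), MeasurableSet E → volume E < ∞ → ∃ C : ℝ, ∀ f ∈ X.carrier,
    ∫⁻ y in E, ENNReal.ofReal |f y| ≤ ENNReal.ofReal (C * X.norm f)

/-- A saturated Banach function space: (L), (F) and (Sa). -/
def IsSaturatedBFS (X : BanachInL0 n) : Prop :=
  X.PropL ∧ X.PropF ∧ X.PropSa

/-- A ball Banach function space: (L), (F), (BSi) and (BLI). -/
def IsBallBFS (X : BanachInL0 n) : Prop :=
  X.PropL ∧ X.PropF ∧ X.PropBSi ∧ X.PropBLI

end BanachInL0

/-- The Köthe dual of a set `S ⊆ L⁰(ℝⁿ)` of measurable functions. -/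
def kotheDual {n : ℕ} (S : Set (Rn n → ℝ)) : Set (Rn n → ℝ) :=
  {g | AEMeasurable g volume ∧ ∀ f ∈ S, Integrable (fun x => f x * g x) volume}

/-- The Köthe dual (semi)norm associated with a set `S` normed by `N : S → ℝ`. -/
def kotheDualNorm {n : ℕ} (S : Set (Rn n → ℝ)) (N : (Rn n → ℝ) → ℝ)
    (g : Rn n → ℝ) : ℝ≥0∞ :=
  ⨆ (f : Rn n → ℝ) (_ : f ∈ S ∧ N f ≤ 1), ∫⁻ x, ENNReal.ofReal |f x * g x|

/-- The Köthe dual (semi)norm associated with a set `S` normed by `N : S → ℝ≥0∞`. -/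
def kotheDualNormE {n : ℕ} (S : Set (Rn n → ℝ)) (N : (Rn n → ℝ) → ℝ≥0∞)
    (g : Rn n → ℝ) : ℝ≥0∞ :=
  ⨆ (f : Rn n → ℝ) (_ : f ∈ S ∧ N f ≤ 1), ∫⁻ x, ENNReal.ofReal |f x * g x|

/-- The Hardy–Littlewood maximal operator on `ℝⁿ`. -/
def hlMaximal {n : ℕ} (f : Rn n → ℝ) (x : Rn n) : ℝ≥0∞ :=
  ⨆ (c : Rn n) (r : ℝ) (_ : x ∈ Metric.ball c r),
    (volume (Metric.ball c r))⁻¹ * ∫⁻ y in Metric.ball c r, ENNReal.ofReal |f y|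


namespace SatAux
open BanachInL0
variable {n : ℕ} (X : BanachInL0 n)

lemma sub_mem {f g : Rn n → ℝ} (hf : f ∈ X.carrier) (hg : g ∈ X.carrier) :
    f - g ∈ X.carrier := by
  have : f - g = f + (-1 : ℝ) • g := by funext x; simp; ring
  rw [this]; exact X.add_mem hf (X.smul_mem _ hg)

lemma norm_neg' (f : Rn n → ℝ) : X.norm (-f) = X.norm f := by
  have : -f = (-1 : ℝ) • f := by funext x; simp
  rw [this, X.norm_smul]; simp

/-- indicator of union stays in X -/
lemma union_ind_mem (hL : X.PropL) {A B : Set (Rn n)} (hA : MeasurableSet A)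
    (hB : MeasurableSet B) (hmA : A.indicator (fun _ => (1:ℝ)) ∈ X.carrier)
    (hmB : B.indicator (fun _ => (1:ℝ)) ∈ X.carrier) :
    (A ∪ B).indicator (fun _ => (1:ℝ)) ∈ X.carrier := by
  refine (hL (A.indicator (fun _ => (1:ℝ)) + B.indicator (fun _ => (1:ℝ)))
    ((A ∪ B).indicator (fun _ => (1:ℝ))) (X.add_mem hmA hmB)
    ((measurable_const.indicator (hA.union hB)).aemeasurable) ?_).1
  filter_upwards with x
  by_cases hxA : x ∈ A <;> by_cases hxB : x ∈ B <;>
    simp [Set.indicator_apply, Set.mem_union, hxA, hxB] <;> norm_num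

lemma sum_mem_norm (h : ℕ → Rn n → ℝ) (s : Finset ℕ) (hmem : ∀ k ∈ s, h k ∈ X.carrier) :
    (∑ k ∈ s, h k) ∈ X.carrier ∧ X.norm (∑ k ∈ s, h k) ≤ ∑ k ∈ s, X.norm (h k) := by
  classical
  induction s using Finset.induction_on with
  | empty => simpa using ⟨X.zero_mem, le_of_eq X.norm_zero⟩
  | @insert a s' hk ih =>
    have hmem' : ∀ k ∈ s', h k ∈ X.carrier := fun k hks => hmem k (Finset.mem_insert_of_mem hks)
    have ha : h a ∈ X.carrier := hmem a (Finset.mem_insert_self a s')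
    obtain ⟨ihm, ihn⟩ := ih hmem'
    rw [Finset.sum_insert hk, Finset.sum_insert hk]
    exact ⟨X.add_mem ha ihm, (X.norm_add_le ha ihm).trans (by linarith)⟩

lemma acc_meas (G : ℕ → Set (Rn n)) (hGm : ∀ i, MeasurableSet (G i)) (k : ℕ) :
    MeasurableSet (⋃ i ∈ Finset.range (k+1), G i) :=
  (Finset.range (k+1)).measurableSet_biUnion fun i _ => hGm i

lemma acc_ind_mem (hL : X.PropL) (G : ℕ → Set (Rn n)) (hGm : ∀ i, MeasurableSet (G i))
    (hGi : ∀ i, (G i).indicator (fun _ => (1:ℝ)) ∈ X.carrier) (k : ℕ) :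
    (⋃ i ∈ Finset.range (k+1), G i).indicator (fun _ => (1:ℝ)) ∈ X.carrier := by
  induction k with
  | zero => simpa using hGi 0
  | succ k ih =>
    have : (⋃ i ∈ Finset.range (k+1+1), G i) = G (k+1) ∪ ⋃ i ∈ Finset.range (k+1), G i := by
      rw [Finset.range_add_one, Finset.set_biUnion_insert]
    rw [this]
    exact union_ind_mem X hL (hGm (k+1)) (acc_meas G hGm k) (hGi (k+1)) ih

lemma exhaust_ball (hL : X.PropL) (hSa : X.PropSa) (B : Set (Rn n)) (hB : MeasurableSet B)
    (hBfin : volume B < ⊤) :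
    ∃ H : ℕ → Set (Rn n), (∀ k, MeasurableSet (H k)) ∧
      (∀ k, (H k).indicator (fun _ => (1:ℝ)) ∈ X.carrier) ∧
      volume (B \ ⋃ k, H k) = 0 := by
  classical
  set 𝒜 : Set (Set (Rn n)) :=
    {G | MeasurableSet G ∧ G ⊆ B ∧ G.indicator (fun _ => (1:ℝ)) ∈ X.carrier} with h𝒜
  have hempty : (∅ : Set (Rn n)) ∈ 𝒜 := by
    refine ⟨MeasurableSet.empty, Set.empty_subset _, ?_⟩
    rw [Set.indicator_empty]
    exact X.zero_mem
  have hne : (volume '' 𝒜).Nonempty := ⟨volume ∅, ⟨∅, hempty, rfl⟩⟩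
  obtain ⟨u, hu_mono, hu_tend, hu_mem⟩ :=
    exists_seq_tendsto_sSup hne (OrderTop.bddAbove _)
  choose G hG hGvol using hu_mem
  set acc : ℕ → Set (Rn n) := fun k => ⋃ i ∈ Finset.range (k+1), G i with hacc
  have haccM : ∀ k, MeasurableSet (acc k) := acc_meas G (fun i => (hG i).1)
  have haccB : ∀ k, acc k ⊆ B := fun k => Set.iUnion₂_subset fun i _ => (hG i).2.1
  have haccI : ∀ k, (acc k).indicator (fun _ => (1:ℝ)) ∈ X.carrier :=
    acc_ind_mem X hL G (fun i => (hG i).1) (fun i => (hG i).2.2)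
  have hacc𝒜 : ∀ k, acc k ∈ 𝒜 := fun k => ⟨haccM k, haccB k, haccI k⟩
  have haccle : ∀ k, volume (acc k) ≤ sSup (volume '' 𝒜) :=
    fun k => le_sSup ⟨acc k, hacc𝒜 k, rfl⟩
  have hule : ∀ k, u k ≤ volume (acc k) := by
    intro k
    rw [← hGvol k]
    exact measure_mono (Set.subset_biUnion_of_mem (Finset.mem_range.2 (Nat.lt_succ_self k)))
  refine ⟨acc, haccM, haccI, ?_⟩
  by_contra hpos
  have hpos' : 0 < volume (B \ ⋃ k, acc k) := pos_iff_ne_zero.2 hpos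
  obtain ⟨F', hF'm, hF'sub, hF'pos, hF'ind⟩ :=
    hSa (B \ ⋃ k, acc k) (hB.diff (MeasurableSet.iUnion haccM)) hpos'
  have hdisj : ∀ k, Disjoint (acc k) F' := by
    intro k
    rw [Set.disjoint_right]
    intro x hxF' hxacc
    exact (hF'sub hxF').2 (Set.mem_iUnion.2 ⟨k, hxacc⟩)
  have hsum : ∀ k, volume (acc k) + volume F' ≤ sSup (volume '' 𝒜) := by
    intro k
    have hmem : acc k ∪ F' ∈ 𝒜 := by
      refine ⟨(haccM k).union hF'm, Set.union_subset (haccB k)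
        (hF'sub.trans Set.diff_subset), ?_⟩
      exact union_ind_mem X hL (haccM k) hF'm (haccI k) hF'ind
    have hmem2 : volume (acc k ∪ F') ∈ volume '' 𝒜 := ⟨acc k ∪ F', hmem, rfl⟩
    have h3 := le_sSup hmem2
    rwa [measure_union (hdisj k) hF'm] at h3
  have hsle : sSup (volume '' 𝒜) ≤ ⨆ k, volume (acc k) := by
    refine le_of_tendsto hu_tend (Filter.Eventually.of_forall fun k => ?_)
    exact (hule k).trans (le_iSup (fun k => volume (acc k)) k)
  have hfin : (⨆ k, volume (acc k)) ≠ ⊤ := by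
    refine ne_top_of_le_ne_top hBfin.ne (iSup_le fun k => measure_mono (haccB k))
  have : (⨆ k, volume (acc k)) + volume F' ≤ ⨆ k, volume (acc k) := by
    rw [ENNReal.iSup_add]
    exact iSup_le fun k => (hsum k).trans hsle
  have hF0 : volume F' = 0 := by
    by_contra hne0
    exact absurd this (not_le.2 (ENNReal.lt_add_right hfin hne0))
  exact hF'pos.ne' hF0

lemma step12 (hL : X.PropL) (hSa : X.PropSa) :
    ∃ F : ℕ → Set (Rn n), (∀ k, MeasurableSet (F k)) ∧ Monotone F ∧
      (∀ k, (F k).indicator (fun _ => (1 : ℝ)) ∈ X.carrier) ∧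
      (⋃ k, F k) = Set.univ := by
  classical
  have hball : ∀ m : ℕ, volume (Metric.ball (0 : Rn n) m) < ⊤ := fun m => measure_ball_lt_top
  choose H hHm hHi hHnull using fun m : ℕ =>
    exhaust_ball X hL hSa (Metric.ball (0 : Rn n) m) Metric.isOpen_ball.measurableSet (hball m)
  set N : Set (Rn n) := ⋃ m : ℕ, (Metric.ball (0 : Rn n) (m : ℝ) \ ⋃ k, H m k) with hN
  have hNmeas : MeasurableSet N :=
    MeasurableSet.iUnion fun m =>
      Metric.isOpen_ball.measurableSet.diff (MeasurableSet.iUnion (hHm m))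
  have hNnull : volume N = 0 := measure_iUnion_null fun m => hHnull m
  set G : ℕ → Set (Rn n) := fun j => H (Nat.unpair j).1 (Nat.unpair j).2 with hGdef
  have hGm : ∀ j, MeasurableSet (G j) := fun j => hHm _ _
  have hGi : ∀ j, (G j).indicator (fun _ => (1:ℝ)) ∈ X.carrier := fun j => hHi _ _
  set F : ℕ → Set (Rn n) := fun j => N ∪ ⋃ i ∈ Finset.range (j+1), G i with hF
  have hFm : ∀ j, MeasurableSet (F j) := fun j => hNmeas.union (acc_meas G hGm j)
  have hFmono : Monotone F := by
    intro a b hab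
    refine Set.union_subset_union_right N ?_
    exact Set.biUnion_subset_biUnion_left (Finset.range_subset_range.2 (by omega))
  have hFi : ∀ j, (F j).indicator (fun _ => (1:ℝ)) ∈ X.carrier := by
    intro j
    have hae : (⋃ i ∈ Finset.range (j+1), G i).indicator (fun _ => (1:ℝ)) =ᵐ[volume]
        (F j).indicator (fun _ => (1:ℝ)) := by
      filter_upwards [measure_eq_zero_iff_ae_notMem.mp hNnull] with x hx
      have hiff : x ∈ F j ↔ x ∈ ⋃ i ∈ Finset.range (j+1), G i := by
        rw [hF]; simp [Set.mem_union, hx]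
      by_cases hxa : x ∈ ⋃ i ∈ Finset.range (j+1), G i
      · rw [Set.indicator_of_mem hxa, Set.indicator_of_mem (hiff.2 hxa)]
      · rw [Set.indicator_of_notMem hxa, Set.indicator_of_notMem (fun h => hxa (hiff.1 h))]
    exact X.mem_congr hae (acc_ind_mem X hL G hGm hGi j)
  refine ⟨F, hFm, hFmono, hFi, ?_⟩
  apply Set.eq_univ_of_forall
  intro x
  obtain ⟨m, hm⟩ := exists_nat_gt ‖x‖
  have hxball : x ∈ Metric.ball (0 : Rn n) m := by
    rw [Metric.mem_ball, dist_zero_right]; exact hm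
  by_cases hxN : x ∈ N
  · exact Set.mem_iUnion.2 ⟨0, Set.mem_union_left _ hxN⟩
  · have hxU : x ∈ ⋃ k, H m k := by
      by_contra hxU
      exact hxN (Set.mem_iUnion.2 ⟨m, hxball, hxU⟩)
    obtain ⟨k, hk⟩ := Set.mem_iUnion.1 hxU
    refine Set.mem_iUnion.2 ⟨Nat.pair m k, Set.mem_union_right _ ?_⟩
    refine Set.mem_biUnion (Finset.mem_range.2 (Nat.lt_succ_self _)) ?_
    show x ∈ G (Nat.pair m k)
    rw [hGdef]
    simp only [Nat.unpair_pair]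
    exact hk

lemma step23 (hL : X.PropL)
    (hex : ∃ F : ℕ → Set (Rn n), (∀ k, MeasurableSet (F k)) ∧ Monotone F ∧
      (∀ k, (F k).indicator (fun _ => (1 : ℝ)) ∈ X.carrier) ∧
      (⋃ k, F k) = Set.univ) :
    ∃ u ∈ X.carrier, ∀ᵐ x ∂volume, 0 < u x := by
  classical
  obtain ⟨F, hFm, hFmono, hFi, hFun⟩ := hex
  set ind : ℕ → Rn n → ℝ := fun k => (F k).indicator (fun _ => (1:ℝ)) with hind
  set c : ℕ → ℝ := fun k => (1/2:ℝ)^k * (1 + X.norm (ind k))⁻¹ with hc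
  have hc0 : ∀ k, 0 < c k := by
    intro k
    have h1 : (0:ℝ) < 1 + X.norm (ind k) := by
      have := X.norm_nonneg (ind k); linarith
    positivity
  have hterm_mem : ∀ k, c k • ind k ∈ X.carrier := fun k => X.smul_mem _ (hFi k)
  have hterm_norm : ∀ k, X.norm (c k • ind k) ≤ (1/2:ℝ)^k := by
    intro k
    rw [X.norm_smul, abs_of_pos (hc0 k), hc, mul_assoc]
    have h1 : (0:ℝ) < 1 + X.norm (ind k) := by
      have := X.norm_nonneg (ind k); linarith
    have h2 : (1 + X.norm (ind k))⁻¹ * X.norm (ind k) ≤ 1 := by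
      rw [inv_mul_le_iff₀ h1]; linarith
    calc (1/2:ℝ)^k * ((1 + X.norm (ind k))⁻¹ * X.norm (ind k)) ≤ (1/2:ℝ)^k * 1 := by
          exact mul_le_mul_of_nonneg_left h2 (by positivity)
      _ = (1/2:ℝ)^k := mul_one _
  set S : ℕ → Rn n → ℝ := fun N => ∑ k ∈ Finset.range N, c k • ind k with hS
  have hSmem : ∀ N, S N ∈ X.carrier := fun N =>
    (sum_mem_norm X _ _ (fun k _ => hterm_mem k)).1
  have hSmeas : ∀ N, Measurable (S N) := by
    intro N
    have : ∀ k, Measurable (c k • ind k) := fun k =>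
      (measurable_const.indicator (hFm k)).const_smul (c k)
    have h2 : Measurable fun x => ∑ k ∈ Finset.range N, (c k • ind k) x :=
      Finset.measurable_sum _ (fun k _ => this k)
    have h3 : S N = fun x => ∑ k ∈ Finset.range N, (c k • ind k) x := by
      funext x; rw [hS]; simp [Finset.sum_apply]
    rw [h3]; exact h2
  have hdiff : ∀ M N : ℕ, M ≤ N → X.norm (S N - S M) ≤ 2 * (1/2:ℝ)^M := by
    intro M N hMN
    have h1 : S N - S M = ∑ k ∈ Finset.Ico M N, c k • ind k := by
      rw [hS]; rw [Finset.sum_Ico_eq_sub _ hMN]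
    rw [h1]
    have h2 := (sum_mem_norm X (fun k => c k • ind k) (Finset.Ico M N)
      (fun k _ => hterm_mem k)).2
    refine h2.trans ?_
    have h3 : ∑ k ∈ Finset.Ico M N, X.norm (c k • ind k)
        ≤ ∑ k ∈ Finset.Ico M N, (1/2:ℝ)^k :=
      Finset.sum_le_sum fun k _ => hterm_norm k
    refine h3.trans ?_
    rw [Finset.sum_Ico_eq_sum_range]
    have h4 : ∑ k ∈ Finset.range (N - M), (1/2:ℝ)^(M+k)
        = (1/2:ℝ)^M * ∑ k ∈ Finset.range (N - M), (1/2:ℝ)^k := by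
      rw [Finset.mul_sum]
      exact Finset.sum_congr rfl fun k _ => by rw [pow_add]
    rw [h4, mul_comm]
    exact mul_le_mul_of_nonneg_right (sum_geometric_two_le _) (by positivity)
  have hcauchy : ∀ ε : ℝ, 0 < ε → ∃ N : ℕ, ∀ k l, N ≤ k → N ≤ l →
      X.norm (S k - S l) < ε := by
    intro ε hε
    obtain ⟨N, hN⟩ := exists_pow_lt_of_lt_one (show (0:ℝ) < ε/2 by linarith)
      (show (1/2:ℝ) < 1 by norm_num)
    refine ⟨N, fun k l hk hl => ?_⟩
    have key : ∀ a b : ℕ, N ≤ a → a ≤ b → X.norm (S b - S a) < ε := by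
      intro a b ha hab
      have := hdiff a b hab
      have h5 : (1/2:ℝ)^a ≤ (1/2:ℝ)^N :=
        pow_le_pow_of_le_one (by norm_num) (by norm_num) ha
      calc X.norm (S b - S a) ≤ 2 * (1/2:ℝ)^a := this
        _ ≤ 2 * (1/2:ℝ)^N := by linarith
        _ < ε := by linarith
    rcases le_total l k with h | h
    · exact key l k hl h
    · have := key k l hk h
      rwa [← norm_neg' X (S l - S k), neg_sub] at this
  obtain ⟨g, hgmem, hgtend⟩ := X.complete S hSmem hcauchy
  have hgae : AEMeasurable g volume := X.aemeasurable hgmem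
  -- a.e. S N ≤ g for every N
  have hSle : ∀ N : ℕ, ∀ᵐ x ∂volume, S N x ≤ g x := by
    intro N
    set h : Rn n → ℝ := fun x => max (S N x - g x) 0 with hh
    have hhmeas : AEMeasurable h volume :=
      (((hSmeas N).aemeasurable.sub hgae).max aemeasurable_const)
    have hptwise : ∀ M, N ≤ M → ∀ x, |h x| ≤ |(S M - g) x| := by
      intro M hNM x
      have hmono : S N x ≤ S M x := by
        rw [hS]
        simp only [Finset.sum_apply]
        refine Finset.sum_le_sum_of_subset_of_nonneg
          (Finset.range_subset_range.2 hNM) (fun k _ _ => ?_)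
        have : (0:ℝ) ≤ ind k x := Set.indicator_nonneg (fun _ _ => zero_le_one) x
        simp only [Pi.smul_apply, smul_eq_mul]
        exact mul_nonneg (hc0 k).le this
      rw [hh, abs_of_nonneg (le_max_right _ _), Pi.sub_apply]
      refine (max_le_max (by linarith : S N x - g x ≤ S M x - g x) le_rfl).trans ?_
      exact max_le (le_abs_self _) (abs_nonneg _)
    have hmemnorm : ∀ M, N ≤ M → h ∈ X.carrier ∧ X.norm h ≤ X.norm (S M - g) := by
      intro M hNM
      exact hL (S M - g) h (sub_mem X (hSmem M) hgmem) hhmeas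
        (Filter.Eventually.of_forall (hptwise M hNM))
    have hnorm0 : X.norm h ≤ 0 := by
      refine ge_of_tendsto hgtend ?_
      filter_upwards [Filter.eventually_ge_atTop N] with M hM
      exact (hmemnorm M hM).2
    have hzero : X.norm h = 0 := le_antisymm hnorm0 (X.norm_nonneg h)
    have := X.norm_eq_zero (hmemnorm N le_rfl).1 hzero
    filter_upwards [this] with x hx
    have : max (S N x - g x) 0 = 0 := hx
    have h6 : S N x - g x ≤ 0 := by
      by_contra hcon
      push_neg at hcon
      rw [max_eq_left hcon.le] at this
      linarith
    linarith
  refine ⟨g, hgmem, ?_⟩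
  filter_upwards [ae_all_iff.2 hSle] with x hx
  have hxU : x ∈ ⋃ k, F k := hFun ▸ Set.mem_univ x
  obtain ⟨k, hk⟩ := Set.mem_iUnion.1 hxU
  have hterm : c k ≤ S (k+1) x := by
    rw [hS]
    simp only [Finset.sum_apply]
    have h7 : (c k • ind k) x = c k := by
      simp [hind, Set.indicator_of_mem hk]
    calc c k = (c k • ind k) x := h7.symm
      _ ≤ ∑ i ∈ Finset.range (k+1), (c i • ind i) x := by
          refine Finset.single_le_sum (f := fun i => (c i • ind i) x) (fun i _ => ?_)
            (Finset.mem_range.2 (Nat.lt_succ_self k))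
          have : (0:ℝ) ≤ ind i x := Set.indicator_nonneg (fun _ _ => zero_le_one) x
          simp only [Pi.smul_apply, smul_eq_mul]
          exact mul_nonneg (hc0 i).le this
  exact lt_of_lt_of_le (hc0 k) (hterm.trans (hx (k+1)))

lemma step34 (hu : ∃ u ∈ X.carrier, ∀ᵐ x ∂volume, 0 < u x) :
    ∀ g : Rn n → ℝ, AEMeasurable g volume →
      (∀ f ∈ X.carrier, ∫⁻ x, ENNReal.ofReal |f x * g x| = 0) →
      g =ᵐ[volume] (0 : Rn n → ℝ) := by
  obtain ⟨u, huX, hupos⟩ := hu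
  intro g hg hint
  have h0 := hint u huX
  have hmeas : AEMeasurable (fun x => ENNReal.ofReal |u x * g x|) volume :=
    ENNReal.measurable_ofReal.comp_aemeasurable
      (measurable_abs.comp_aemeasurable ((X.aemeasurable huX).mul hg))
  have hae := (lintegral_eq_zero_iff' hmeas).1 h0
  filter_upwards [hae, hupos] with x h1 h2
  have h3 : ENNReal.ofReal |u x * g x| = 0 := h1
  rw [ENNReal.ofReal_eq_zero] at h3
  have h4 : u x * g x = 0 := abs_eq_zero.1 (le_antisymm h3 (abs_nonneg _))
  rcases mul_eq_zero.1 h4 with h | h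
  · exact absurd h h2.ne'
  · exact h

lemma step41 (hL : X.PropL)
    (h4 : ∀ g : Rn n → ℝ, AEMeasurable g volume →
      (∀ f ∈ X.carrier, ∫⁻ x, ENNReal.ofReal |f x * g x| = 0) →
      g =ᵐ[volume] (0 : Rn n → ℝ)) : X.PropSa := by
  intro E hE hEpos
  by_contra hno
  push_neg at hno
  have hzero : ∀ f ∈ X.carrier,
      ∫⁻ x, ENNReal.ofReal |f x * E.indicator (fun _ => (1:ℝ)) x| = 0 := by
    intro f hf
    by_contra hne
    obtain ⟨f', hf'meas, hff'⟩ := X.aemeasurable hf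
    have hcongr : (fun x => ENNReal.ofReal |f x * E.indicator (fun _ => (1:ℝ)) x|)
        =ᵐ[volume] fun x => ENNReal.ofReal |f' x * E.indicator (fun _ => (1:ℝ)) x| :=
      hff'.mono fun x hx => by dsimp only; rw [hx]
    rw [lintegral_congr_ae hcongr] at hne
    have hmeas' : Measurable fun x =>
        ENNReal.ofReal |f' x * E.indicator (fun _ => (1:ℝ)) x| :=
      ENNReal.measurable_ofReal.comp ((hf'meas.mul (measurable_const.indicator hE)).abs)
    have hne2 := (lintegral_eq_zero_iff hmeas').not.1 hne
    have hposset : volume {x | f' x ≠ 0 ∧ x ∈ E} ≠ 0 := by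
      intro hcon
      apply hne2
      rw [Filter.EventuallyEq, ae_iff]
      refine measure_mono_null ?_ hcon
      intro x hx
      simp only [Set.mem_setOf_eq, Pi.zero_apply] at hx ⊢
      rw [ENNReal.ofReal_eq_zero, not_le] at hx
      constructor
      · intro h; apply absurd hx; rw [h]; simp
      · by_contra hxe; apply absurd hx; rw [Set.indicator_of_notMem hxe]; simp
    have hsub : {x | f' x ≠ 0 ∧ x ∈ E} ⊆
        ⋃ m : ℕ, (E ∩ {x | 1/((m:ℝ)+1) ≤ |f' x|}) := by
      rintro x ⟨hfx, hxE⟩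
      obtain ⟨m, hm⟩ := exists_nat_one_div_lt (abs_pos.2 hfx)
      exact Set.mem_iUnion.2 ⟨m, hxE, hm.le⟩
    have hexm : ∃ m : ℕ, volume (E ∩ {x | 1/((m:ℝ)+1) ≤ |f' x|}) ≠ 0 := by
      by_contra hall
      push_neg at hall
      exact hposset (measure_mono_null hsub (measure_iUnion_null hall))
    obtain ⟨m, hm⟩ := hexm
    set Fm := E ∩ {x | 1/((m:ℝ)+1) ≤ |f' x|} with hFmdef
    have hFmmeas : MeasurableSet Fm :=
      hE.inter (measurableSet_le measurable_const hf'meas.abs)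
    have hFmpos : 0 < volume Fm := pos_iff_ne_zero.2 hm
    have hFmind : Fm.indicator (fun _ => (1:ℝ)) ∈ X.carrier := by
      refine (hL (((m:ℝ)+1) • f) _ (X.smul_mem _ hf)
        ((measurable_const.indicator hFmmeas).aemeasurable) ?_).1
      filter_upwards [hff'] with x hx
      by_cases hxF : x ∈ Fm
      · rw [Set.indicator_of_mem hxF]
        have h8 : 1/((m:ℝ)+1) ≤ |f' x| := hxF.2
        have h9 : (0:ℝ) < (m:ℝ)+1 := by positivity
        rw [Pi.smul_apply, smul_eq_mul, abs_mul, hx, abs_of_pos h9, abs_one]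
        rw [div_le_iff₀ h9] at h8
        nlinarith [h8]
      · rw [Set.indicator_of_notMem hxF]; simp; positivity
    exact hno Fm hFmmeas Set.inter_subset_left hFmpos hFmind
  have hEzero := h4 (E.indicator (fun _ => (1:ℝ)))
    ((measurable_const.indicator hE).aemeasurable) hzero
  have hE0 : volume E = 0 := by
    rw [Filter.EventuallyEq, ae_iff] at hEzero
    refine measure_mono_null ?_ hEzero
    intro x hxE
    simp [hxE]
  exact absurd hE0 hEpos.ne'

end SatAux

/-- **Characterizations of the saturation property.**
For a Banach space `X ⊆ L⁰(ℝⁿ)` with the lattice property, the following are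
equivalent: (i) saturation; (ii) an increasing exhaustion of `ℝⁿ` by measurable
sets whose indicators lie in `X`; (iii) existence of an a.e. positive `u ∈ X`;
(iv) `X` separates `L⁰` via integration. -/
theorem propSa_tfae {n : ℕ} (X : BanachInL0 n) (hL : X.PropL) :
    [X.PropSa,
     ∃ F : ℕ → Set (Rn n), (∀ k, MeasurableSet (F k)) ∧ Monotone F ∧
       (∀ k, (F k).indicator (fun _ => (1 : ℝ)) ∈ X.carrier) ∧
       (⋃ k, F k) = Set.univ,
     ∃ u ∈ X.carrier, ∀ᵐ x ∂volume, 0 < u x,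
     ∀ g : Rn n → ℝ, AEMeasurable g volume →
       (∀ f ∈ X.carrier, ∫⁻ x, ENNReal.ofReal |f x * g x| = 0) →
       g =ᵐ[volume] (0 : Rn n → ℝ)].TFAE := by
  tfae_have 1 → 2 := fun h => SatAux.step12 X hL h
  tfae_have 2 → 3 := fun h => SatAux.step23 X hL h
  tfae_have 3 → 4 := fun h => SatAux.step34 X h
  tfae_have 4 → 1 := fun h => SatAux.step41 X hL h
  tfae_finish

end
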